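/- Let r be a binary relation on a type α that is quasi-terminating and confluent. Then every element u of α has a quasi-normal form: there exists v with u →* v such that for every w with v →* w one has w →* v. -/

import Mathlib

/-- A relation is confluent if any two rewriting sequences from a common source can be
completed to a common target. -/
def Confluent {α : Type*} (r : α → α → Prop) : Prop :=
  ∀ u v w : α, Relation.ReflTransGen r u v → Relation.ReflTransGen r u w →
    ∃ z : α, Relation.ReflTransGen r v z ∧ Relation.ReflTransGen r w z

/-- A relation is quasi-terminating if every infinite rewriting sequence contains
infinitely many occurrences of some element. -/
def QuasiTerminating {α : Type*} (r : α → α → Prop) : Prop :=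
  ∀ f : ℕ → α, (∀ i : ℕ, r (f i) (f (i + 1))) → ∃ a : α, {i : ℕ | f i = a}.Infinite

private lemma path_of_rtg {α : Type*} {r : α → α → Prop} {v w : α}
    (h : Relation.ReflTransGen r v w) :
    ∃ n : ℕ, ∃ g : ℕ → α, g 0 = v ∧ (∀ i, n ≤ i → g i = w) ∧ ∀ i < n, r (g i) (g (i + 1)) := by
  induction h using Relation.ReflTransGen.head_induction_on with
  | refl => exact ⟨0, fun _ => w, rfl, fun _ _ => rfl, fun i hi => absurd hi (Nat.not_lt_zero i)⟩
  | head hstep htail ih =>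
      obtain ⟨n, g, h0, hend, hs⟩ := ih
      rename_i a c
      refine ⟨n + 1, fun i => Nat.casesOn i a g, rfl, ?_, ?_⟩
      · rintro (_ | j) hj
        · omega
        · exact hend j (by omega)
      · rintro (_ | j) hj
        · simpa [h0] using hstep
        · exact hs j (by omega)

theorem exists_quasiNormalForm {α : Type*} (r : α → α → Prop)
    (hqt : QuasiTerminating r) (hc : Confluent r) (u : α) :
    ∃ v : α, Relation.ReflTransGen r u v ∧
      ∀ w : α, Relation.ReflTransGen r v w → Relation.ReflTransGen r w v := by
  classical
  by_contra hno
  push_neg at hno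
  -- hno : ∀ v, Reach u v → ∃ w, Reach v w ∧ ¬ Reach w v
  have key : ∀ x : α, ∃ n : ℕ, ∃ g : ℕ → α, Relation.ReflTransGen r u x →
      (1 ≤ n ∧ g 0 = x ∧ (∀ i < n, r (g i) (g (i + 1))) ∧
        ¬ Relation.ReflTransGen r (g n) x ∧ Relation.ReflTransGen r u (g n)) := by
    intro x
    by_cases hx : Relation.ReflTransGen r u x
    · obtain ⟨w, hxw, hwx⟩ := hno x hx
      obtain ⟨n, g, h0, hend, hs⟩ := path_of_rtg hxw
      have hgn : g n = w := hend n le_rfl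
      have hn : 1 ≤ n := by
        by_contra hn
        have : n = 0 := by omega
        exact hwx (by rw [← hgn, this, h0])
      exact ⟨n, g, fun _ => ⟨hn, h0, hs, by rw [hgn]; exact hwx,
        by rw [hgn]; exact hx.trans hxw⟩⟩
    · exact ⟨1, fun _ => x, fun h => absurd h hx⟩
  choose N G hNG using key
  let step : α × ℕ → α × ℕ :=
    fun p => if p.2 + 1 < N p.1 then (p.1, p.2 + 1) else (G p.1 (N p.1), 0)
  let s : ℕ → α × ℕ := fun n => step^[n] (u, 0)
  have hs0 : s 0 = (u, 0) := rfl
  have hstep_pos : ∀ n, (s n).2 + 1 < N (s n).1 → s (n + 1) = ((s n).1, (s n).2 + 1) := by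
    intro n h
    show step^[n + 1] (u, 0) = _
    rw [Function.iterate_succ_apply']
    exact if_pos h
  have hstep_neg : ∀ n, ¬ ((s n).2 + 1 < N (s n).1) →
      s (n + 1) = (G (s n).1 (N (s n).1), 0) := by
    intro n h
    show step^[n + 1] (u, 0) = _
    rw [Function.iterate_succ_apply']
    exact if_neg h
  let f : ℕ → α := fun n => G (s n).1 (s n).2
  have hfeq : ∀ n, f n = G (s n).1 (s n).2 := fun _ => rfl
  -- invariant
  have inv : ∀ n, Relation.ReflTransGen r u (s n).1 ∧ (s n).2 < N (s n).1 := by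
    intro n
    induction n with
    | zero =>
        refine ⟨Relation.ReflTransGen.refl, ?_⟩
        have := (hNG u Relation.ReflTransGen.refl).1
        show 0 < N u
        omega
    | succ n ih =>
        obtain ⟨hreach, hlt⟩ := ih
        by_cases hc2 : (s n).2 + 1 < N (s n).1
        · rw [hstep_pos n hc2]
          exact ⟨hreach, hc2⟩
        · rw [hstep_neg n hc2]
          obtain ⟨-, -, -, -, hru⟩ := hNG (s n).1 hreach
          exact ⟨hru, (hNG _ hru).1⟩
  -- f is an r-sequence
  have hfstep : ∀ n, r (f n) (f (n + 1)) := by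
    intro n
    obtain ⟨hreach, hlt⟩ := inv n
    obtain ⟨hn1, hg0, hgs, hnr, hru⟩ := hNG (s n).1 hreach
    rw [hfeq, hfeq]
    by_cases hc2 : (s n).2 + 1 < N (s n).1
    · rw [hstep_pos n hc2]
      exact hgs _ hlt
    · rw [hstep_neg n hc2]
      have hN : N (s n).1 = (s n).2 + 1 := by omega
      have h00 : G (G (s n).1 (N (s n).1)) 0 = G (s n).1 (N (s n).1) := (hNG _ hru).2.1
      simp only
      rw [h00, hN]
      exact hgs _ hlt
  -- reachability along f
  have hfmono : ∀ m n, m ≤ n → Relation.ReflTransGen r (f m) (f n) := by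
    intro m n hmn
    induction n, hmn using Nat.le_induction with
    | base => exact Relation.ReflTransGen.refl
    | succ n hmn ih => exact ih.tail (hfstep n)
  -- block-start position invariant
  have hpos : ∀ n, (s n).2 ≤ n ∧ f (n - (s n).2) = (s n).1 := by
    intro n
    induction n with
    | zero =>
        refine ⟨le_rfl, ?_⟩
        rw [hfeq]
        simp only [hs0]
        exact (hNG u Relation.ReflTransGen.refl).2.1
    | succ n ih =>
        obtain ⟨hle, heq⟩ := ih
        have hreach := (inv n).1
        by_cases hc2 : (s n).2 + 1 < N (s n).1
        · rw [hstep_pos n hc2]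
          refine ⟨by omega, ?_⟩
          have h3 : n + 1 - ((s n).2 + 1) = n - (s n).2 := by omega
          simp only [h3]
          exact heq
        · rw [hstep_neg n hc2]
          refine ⟨by omega, ?_⟩
          have hru := (hNG (s n).1 hreach).2.2.2.2
          simp only [Nat.sub_zero]
          rw [hfeq, hstep_neg n hc2]
          exact (hNG _ hru).2.1
  -- offsets grow at most by one per step
  have hoff : ∀ n k, (s (n + k)).2 ≤ (s n).2 + k := by
    intro n k
    induction k with
    | zero => simp
    | succ k ih =>
        rw [← Nat.add_assoc]
        by_cases hc2 : (s (n + k)).2 + 1 < N (s (n + k)).1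
        · rw [hstep_pos _ hc2]; simp only; omega
        · rw [hstep_neg _ hc2]; simp only; omega
  -- transitions are cofinal
  have htrans : ∀ n, ∃ m, n ≤ m ∧ ¬ ((s m).2 + 1 < N (s m).1) := by
    have aux : ∀ d n, N (s n).1 - ((s n).2 + 1) ≤ d →
        ∃ m, n ≤ m ∧ ¬ ((s m).2 + 1 < N (s m).1) := by
      intro d
      induction d with
      | zero => intro n h; exact ⟨n, le_rfl, by omega⟩
      | succ d ih =>
          intro n h
          by_cases hc2 : (s n).2 + 1 < N (s n).1
          · obtain ⟨m, hm, h2⟩ := ih (n + 1) (by rw [hstep_pos n hc2]; simp only; omega)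
            exact ⟨m, by omega, h2⟩
          · exact ⟨n, le_rfl, hc2⟩
    intro n
    exact aux _ n le_rfl
  -- apply quasi-termination
  obtain ⟨a, ha⟩ := hqt f hfstep
  obtain ⟨i₀, hi₀⟩ := ha.nonempty
  obtain ⟨m₁, hm₁, hm₁tr⟩ := htrans i₀
  have hs0' : (s (m₁ + 1)).2 = 0 := by rw [hstep_neg m₁ hm₁tr]
  obtain ⟨m₂, hm₂, hntr⟩ := htrans (m₁ + 1)
  -- the block containing m₂ started at position m₂ - (s m₂).2 ≥ m₁ + 1 ≥ i₀
  have hoffm₂ : (s m₂).2 ≤ m₂ - (m₁ + 1) := by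
    have h4 := hoff (m₁ + 1) (m₂ - (m₁ + 1))
    rw [hs0'] at h4
    have heq : m₁ + 1 + (m₂ - (m₁ + 1)) = m₂ := by omega
    rw [heq] at h4
    omega
  obtain ⟨hle₂, hstart₂⟩ := hpos m₂
  have hstartge : i₀ ≤ m₂ - (s m₂).2 := by omega
  have hreach₂ := (inv m₂).1
  obtain ⟨-, -, -, hnr₂, hru₂⟩ := hNG (s m₂).1 hreach₂
  -- f (m₂ + 1) = G (s m₂).1 (N (s m₂).1)
  have hfm₂ : f (m₂ + 1) = G (s m₂).1 (N (s m₂).1) := by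
    rw [hfeq, hstep_neg m₂ hntr]
    exact (hNG _ hru₂).2.1
  obtain ⟨j, hj, hjgt⟩ := ha.exists_gt m₂
  -- w₂ →* a →* x₂, contradiction
  apply hnr₂
  have h1 : Relation.ReflTransGen r (G (s m₂).1 (N (s m₂).1)) a := by
    rw [← hfm₂, ← hj]
    exact hfmono (m₂ + 1) j (by omega)
  have h2 : Relation.ReflTransGen r a (s m₂).1 := by
    rw [← hstart₂, ← hi₀]
    exact hfmono i₀ (m₂ - (s m₂).2) hstartge
  exact h1.trans h2
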